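/- Let a ≤ b be reals and let Q₁, Q₂ : [a,b] → ℝ satisfy Q₂(x) ≥ Q₁(x) > 0 for all x ∈ [a,b]. Let y₁, y₂ : [a,b] → ℝ be twice continuously differentiable and satisfy y₁''(x) = Q₁(x)·y₁(x) and y₂''(x) = Q₂(x)·y₂(x) for all x ∈ [a,b]. If y₁(a) ≥ y₂(a), y₁(b) ≥ y₂(b), and y₂(x) ≥ 0 for all x ∈ [a,b], then y₁(x) ≥ y₂(x) for every x ∈ [a,b]. -/
import Mathlib


open Set

/-- comparison principle for second-order linear ODEs: suppose
`y₁'' = Q₁ y₁` and `y₂'' = Q₂ y₂` on `[a,b]` with `Q₂ ≥ Q₁ > 0`, `y₁ ≥ y₂` at the two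
endpoints and `y₂ ≥ 0` on `[a,b]`. Then `y₁ ≥ y₂` on all of `[a,b]`.
The `C²` regularity of `yᵢ` on `[a,b]` is expressed by providing functions `yᵢ'`,
`yᵢ''` that are derivatives within `[a,b]`, with `yᵢ''` continuous on `[a,b]`. -/
theorem stmt13 (a b : ℝ) (hab : a ≤ b) (Q₁ Q₂ : ℝ → ℝ)
    (y₁ y₁' y₁'' y₂ y₂' y₂'' : ℝ → ℝ)
    (hQpos : ∀ x ∈ Set.Icc a b, 0 < Q₁ x)
    (hQle : ∀ x ∈ Set.Icc a b, Q₁ x ≤ Q₂ x)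
    (hy₁d : ∀ x ∈ Set.Icc a b, HasDerivWithinAt y₁ (y₁' x) (Set.Icc a b) x)
    (hy₁dd : ∀ x ∈ Set.Icc a b, HasDerivWithinAt y₁' (y₁'' x) (Set.Icc a b) x)
    (hy₁c : ContinuousOn y₁'' (Set.Icc a b))
    (hy₂d : ∀ x ∈ Set.Icc a b, HasDerivWithinAt y₂ (y₂' x) (Set.Icc a b) x)
    (hy₂dd : ∀ x ∈ Set.Icc a b, HasDerivWithinAt y₂' (y₂'' x) (Set.Icc a b) x)
    (hy₂c : ContinuousOn y₂'' (Set.Icc a b))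
    (hode₁ : ∀ x ∈ Set.Icc a b, y₁'' x = Q₁ x * y₁ x)
    (hode₂ : ∀ x ∈ Set.Icc a b, y₂'' x = Q₂ x * y₂ x)
    (hend_a : y₂ a ≤ y₁ a) (hend_b : y₂ b ≤ y₁ b)
    (hy₂pos : ∀ x ∈ Set.Icc a b, 0 ≤ y₂ x) :
    ∀ x ∈ Set.Icc a b, y₂ x ≤ y₁ x := by
  set u : ℝ → ℝ := fun x => y₁ x - y₂ x with hu
  set v : ℝ → ℝ := fun x => y₁' x - y₂' x with hv
  set w : ℝ → ℝ := fun x => y₁'' x - y₂'' x with hw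
  have hud : ∀ x ∈ Set.Icc a b, HasDerivWithinAt u (v x) (Set.Icc a b) x :=
    fun x hx => (hy₁d x hx).sub (hy₂d x hx)
  have hvd : ∀ x ∈ Set.Icc a b, HasDerivWithinAt v (w x) (Set.Icc a b) x :=
    fun x hx => (hy₁dd x hx).sub (hy₂dd x hx)
  have hucont : ContinuousOn u (Set.Icc a b) :=
    fun x hx => (hud x hx).continuousWithinAt
  have hvcont : ContinuousOn v (Set.Icc a b) :=
    fun x hx => (hvd x hx).continuousWithinAt
  by_contra hcon
  push_neg at hcon
  obtain ⟨x₀, hx₀, hx₀lt⟩ := hcon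
  obtain ⟨c, hcmem, hcmin⟩ :=
    isCompact_Icc.exists_isMinOn (Set.nonempty_Icc.2 hab) hucont
  have hucneg : u c < 0 := lt_of_le_of_lt (hcmin hx₀) (by simp [hu]; linarith)
  have hca : a < c := by
    rcases lt_or_eq_of_le hcmem.1 with h | h
    · exact h
    · exfalso; rw [← h] at hucneg; simp [hu] at hucneg; linarith
  have hcb : c < b := by
    rcases lt_or_eq_of_le hcmem.2 with h | h
    · exact h
    · exfalso; rw [h] at hucneg; simp [hu] at hucneg; linarith
  have hnhds : Set.Icc a b ∈ nhds c := Icc_mem_nhds hca hcb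
  have hudc : HasDerivAt u (v c) c := (hud c hcmem).hasDerivAt hnhds
  have hvc0 : v c = 0 :=
    (hcmin.isLocalMin hnhds).hasDerivAt_eq_zero hudc
  -- find d > c with u < 0 on Icc c d
  have hcontc : ContinuousAt u c := hudc.continuousAt
  have hev : ∀ᶠ x in nhds c, u x < 0 := hcontc.eventually_lt continuousAt_const hucneg
  obtain ⟨ε, hε, hball⟩ := Metric.eventually_nhds_iff.1 hev
  set d : ℝ := min b (c + ε / 2) with hd
  have hcd : c < d := lt_min hcb (by linarith)
  have hdb : d ≤ b := min_le_left _ _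
  have hsub : Set.Icc c d ⊆ Set.Icc a b := Set.Icc_subset_Icc hca.le hdb
  have hneg : ∀ x ∈ Set.Icc c d, u x < 0 := by
    intro x hx
    apply hball
    rw [Real.dist_eq, abs_lt]
    constructor
    · linarith [hx.1]
    · have : x ≤ c + ε / 2 := le_trans hx.2 (min_le_right _ _)
      linarith
  have hIooab : ∀ x ∈ Set.Ioo c d, x ∈ Set.Ioo a b := by
    intro x hx
    exact ⟨lt_trans hca hx.1, lt_of_lt_of_le hx.2 hdb⟩
  have hwneg : ∀ x ∈ Set.Icc c d, w x < 0 := by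
    intro x hx
    have hxab : x ∈ Set.Icc a b := hsub hx
    have h1 := hode₁ x hxab
    have h2 := hode₂ x hxab
    have hq := hQle x hxab
    have hqp := hQpos x hxab
    have hy2 := hy₂pos x hxab
    have hux := hneg x hx
    simp only [hu] at hux
    simp only [hw, h1, h2]
    nlinarith [mul_le_mul_of_nonneg_right hq hy2]
  have hanti_v : StrictAntiOn v (Set.Icc c d) := by
    apply strictAntiOn_of_deriv_neg (convex_Icc c d) (hvcont.mono hsub)
    intro x hx
    rw [interior_Icc] at hx
    have hxab : Set.Icc a b ∈ nhds x :=
      Icc_mem_nhds (hIooab x hx).1 (hIooab x hx).2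
    have := (hvd x (hsub (Set.Ioo_subset_Icc_self hx))).hasDerivAt hxab
    rw [this.deriv]
    exact hwneg x (Set.Ioo_subset_Icc_self hx)
  have hvneg : ∀ x ∈ Set.Ioo c d, v x < 0 := by
    intro x hx
    have := hanti_v (Set.left_mem_Icc.2 hcd.le) (Set.Ioo_subset_Icc_self hx) hx.1
    rw [hvc0] at this
    exact this
  have hanti_u : StrictAntiOn u (Set.Icc c d) := by
    apply strictAntiOn_of_deriv_neg (convex_Icc c d) (hucont.mono hsub)
    intro x hx
    rw [interior_Icc] at hx
    have hxab : Set.Icc a b ∈ nhds x :=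
      Icc_mem_nhds (hIooab x hx).1 (hIooab x hx).2
    have := (hud x (hsub (Set.Ioo_subset_Icc_self hx))).hasDerivAt hxab
    rw [this.deriv]
    exact hvneg x hx
  have : u d < u c :=
    hanti_u (Set.left_mem_Icc.2 hcd.le) (Set.right_mem_Icc.2 hcd.le) hcd
  have : u c ≤ u d := hcmin (hsub (Set.right_mem_Icc.2 hcd.le))
  linarith
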